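/- Let ψ > 0, E_max > 0, C > 0, and K > 0, and define β(Q) = K · √( (e^{ψQ} − e^{ψ})³ / (E_max − C/Q) ) for Q in an interval I ⊆ (1, ∞) on which E_max − C/Q > 0. If 3ψ²e^{ψ}·Q² − 2·E_max·Q + C ≥ 0 for all Q ∈ I, then for all nonnegative constants c₀, A, B, the function Q ↦ c₀·β(Q) + A/Q + B/√Q is convex on I. -/

import Mathlib

open Real Set

theorem aux_convexOn {D : Set ℝ} (hD : Convex ℝ D) {f f1 f2 : ℝ → ℝ}
    (h1 : ∀ x ∈ D, HasDerivAt f (f1 x) x)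
    (h2 : ∀ x ∈ interior D, HasDerivAt f1 (f2 x) x)
    (hnn : ∀ x ∈ interior D, 0 ≤ f2 x) : ConvexOn ℝ D f := by
  apply convexOn_of_deriv2_nonneg hD
  · exact fun x hx => (h1 x hx).continuousAt.continuousWithinAt
  · exact fun x hx => (h1 x (interior_subset hx)).differentiableAt.differentiableWithinAt
  · intro x hx
    have hev : deriv f =ᶠ[nhds x] f1 := by
      filter_upwards [isOpen_interior.mem_nhds hx] with y hy using (h1 y (interior_subset hy)).deriv
    exact ((h2 x hx).differentiableAt.congr_of_eventuallyEq hev).differentiableWithinAt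
  · intro x hx
    have hev : deriv f =ᶠ[nhds x] f1 := by
      filter_upwards [isOpen_interior.mem_nhds hx] with y hy using (h1 y (interior_subset hy)).deriv
    show 0 ≤ deriv (deriv f) x
    rw [hev.deriv_eq, (h2 x hx).deriv]
    exact hnn x hx

noncomputable def uu (ψ Emax C : ℝ) : ℝ → ℝ := fun Q =>
  (Real.exp (ψ*Q) - Real.exp ψ)^3 / (Emax - C/Q)

noncomputable def uu1 (ψ Emax C : ℝ) : ℝ → ℝ := fun x =>
  (3*(Real.exp (ψ*x) - Real.exp ψ)^2*(ψ*Real.exp (ψ*x))*(Emax - C/x)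
    - (Real.exp (ψ*x) - Real.exp ψ)^3*(C/x^2)) / (Emax - C/x)^2

noncomputable def uu2 (ψ Emax C : ℝ) : ℝ → ℝ := fun x =>
  (6*(Real.exp (ψ*x) - Real.exp ψ)*(ψ*Real.exp (ψ*x))^2*(Emax - C/x)^2
   + 3*(Real.exp (ψ*x) - Real.exp ψ)^2*(ψ^2*Real.exp (ψ*x))*(Emax - C/x)^2
   + 2*(Real.exp (ψ*x) - Real.exp ψ)^3*(Emax - C/x)*(C/x^3)
   - 6*(Real.exp (ψ*x) - Real.exp ψ)^2*(ψ*Real.exp (ψ*x))*(Emax - C/x)*(C/x^2)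
   + 2*(Real.exp (ψ*x) - Real.exp ψ)^3*(C/x^2)^2) / (Emax - C/x)^3

lemma hd_a (ψ : ℝ) (x : ℝ) :
    HasDerivAt (fun Q => Real.exp (ψ*Q) - Real.exp ψ) (ψ*Real.exp (ψ*x)) x := by
  have h := (((hasDerivAt_id x).const_mul ψ).exp).sub_const (Real.exp ψ)
  simpa [mul_comm] using h

lemma hd_e (ψ : ℝ) (x : ℝ) :
    HasDerivAt (fun Q => ψ * Real.exp (ψ*Q)) (ψ*(ψ*Real.exp (ψ*x))) x := by
  have h := (((hasDerivAt_id x).const_mul ψ).exp).const_mul ψ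
  simpa [mul_comm, mul_assoc, mul_left_comm] using h

lemma hd_b (Emax C : ℝ) {x : ℝ} (hx : x ≠ 0) :
    HasDerivAt (fun Q : ℝ => Emax - C/Q) (C/x^2) x := by
  have h := ((hasDerivAt_const x C).div (hasDerivAt_id x) hx).const_sub Emax
  refine h.congr_deriv ?_
  simp only [id]
  field_simp
  ring

lemma hd_u (ψ Emax C : ℝ) {x : ℝ} (hx : x ≠ 0) (hb : Emax - C/x ≠ 0) :
    HasDerivAt (uu ψ Emax C) (uu1 ψ Emax C x) x := by
  have h := ((hd_a ψ x).pow 3).div (hd_b Emax C hx) hb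
  refine h.congr_deriv ?_
  unfold uu1
  simp only [Pi.pow_apply, Nat.reduceSub, Nat.cast_ofNat]

lemma hd_u1 (ψ Emax C : ℝ) {x : ℝ} (hx : x ≠ 0) (hb : Emax - C/x ≠ 0) :
    HasDerivAt (uu1 ψ Emax C) (uu2 ψ Emax C x) x := by
  have hb2 : Emax * x - C ≠ 0 := by
    intro h; apply hb
    rw [sub_eq_zero] at h ⊢
    field_simp
    linarith
  have hN := (((((hd_a ψ x).pow 2).const_mul (3:ℝ)).mul (hd_e ψ x)).mul
      (hd_b Emax C hx)).sub (((hd_a ψ x).pow 3).mul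
      ((hasDerivAt_const x C).div (hasDerivAt_pow 2 x) (pow_ne_zero 2 hx)))
  have h := hN.div ((hd_b Emax C hx).pow 2) (pow_ne_zero 2 hb)
  refine h.congr_deriv ?_
  unfold uu2
  simp only [Pi.pow_apply, Pi.mul_apply, Pi.sub_apply, Pi.div_apply, Nat.reduceSub, Nat.cast_ofNat]
  push_cast
  field_simp
  ring

lemma key_identity (ψ Emax C : ℝ) {x : ℝ} (hx : x ≠ 0) (hb : Emax - C/x ≠ 0) :
    2*(uu ψ Emax C x)*(uu2 ψ Emax C x) - (uu1 ψ Emax C x)^2 =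
      (Real.exp (ψ*x) - Real.exp ψ)^4 / (Emax - C/x)^4 *
        (3*(ψ*Real.exp (ψ*x)*(Emax - C/x) - (Real.exp (ψ*x) - Real.exp ψ)*(C/x^2))^2
         + 6*(Real.exp (ψ*x) - Real.exp ψ)*(ψ^2*Real.exp (ψ*x))*(Emax - C/x)^2
         + 4*(Real.exp (ψ*x) - Real.exp ψ)^2*(Emax - C/x)*(C/x^3)) := by
  have hb2 : Emax * x - C ≠ 0 := by
    intro h; apply hb
    rw [sub_eq_zero] at h ⊢
    field_simp
    linarith
  unfold uu uu1 uu2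
  field_simp
  ring

lemma beta_convexOn (ψ Emax C c₀ K : ℝ) (hψ : 0 < ψ) (hC : 0 < C)
    (hc₀ : 0 ≤ c₀) (hK : 0 ≤ K)
    (I : Set ℝ) (hIconv : Convex ℝ I) (hI : I ⊆ Ioi 1)
    (hpos : ∀ Q ∈ I, 0 < Emax - C / Q) :
    ConvexOn ℝ I (fun Q => c₀ * (K * Real.sqrt (uu ψ Emax C Q))) := by
  have key : ∀ x ∈ I, 1 < x ∧ 0 < Emax - C/x ∧ 0 < uu ψ Emax C x := by
    intro x hx
    have hx1 : 1 < x := hI hx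
    have hb := hpos x hx
    have ha : 0 < Real.exp (ψ*x) - Real.exp ψ := by
      rw [sub_pos]
      exact Real.exp_lt_exp.2 (by nlinarith)
    exact ⟨hx1, hb, div_pos (pow_pos ha 3) hb⟩
  apply aux_convexOn hIconv
    (f1 := fun x => c₀ * (K * (uu1 ψ Emax C x / (2 * Real.sqrt (uu ψ Emax C x)))))
    (f2 := fun x => c₀ * (K * ((2*(uu ψ Emax C x)*(uu2 ψ Emax C x) - (uu1 ψ Emax C x)^2)
        / (4 * uu ψ Emax C x * Real.sqrt (uu ψ Emax C x)))))
  · intro x hx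
    obtain ⟨hx1, hb, hu⟩ := key x hx
    have hx0 : (0:ℝ) < x := lt_trans one_pos hx1
    exact (((hd_u ψ Emax C hx0.ne' hb.ne').sqrt hu.ne').const_mul K).const_mul c₀
  · intro x hx
    obtain ⟨hx1, hb, hu⟩ := key x (interior_subset hx)
    have hx0 : (0:ℝ) < x := lt_trans one_pos hx1
    have hs : 0 < Real.sqrt (uu ψ Emax C x) := Real.sqrt_pos.2 hu
    have h2s : (2:ℝ) * Real.sqrt (uu ψ Emax C x) ≠ 0 := by positivity
    have h := ((hd_u1 ψ Emax C hx0.ne' hb.ne').div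
        (((hd_u ψ Emax C hx0.ne' hb.ne').sqrt hu.ne').const_mul 2) h2s).const_mul K
        |>.const_mul c₀
    refine h.congr_deriv ?_
    have hsq : Real.sqrt (uu ψ Emax C x) ^ 2 = uu ψ Emax C x := Real.sq_sqrt hu.le
    set s := Real.sqrt (uu ψ Emax C x) with hsdef
    rw [← hsq]
    field_simp
    ring
  · intro x hx
    obtain ⟨hx1, hb, hu⟩ := key x (interior_subset hx)
    have hx0 : (0:ℝ) < x := lt_trans one_pos hx1
    have ha : 0 < Real.exp (ψ*x) - Real.exp ψ := by
      rw [sub_pos]; exact Real.exp_lt_exp.2 (by nlinarith)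
    have hnum : 0 ≤ 2*(uu ψ Emax C x)*(uu2 ψ Emax C x) - (uu1 ψ Emax C x)^2 := by
      rw [key_identity ψ Emax C hx0.ne' hb.ne']
      have t1 : 0 ≤ 3*(ψ*Real.exp (ψ*x)*(Emax - C/x) - (Real.exp (ψ*x) - Real.exp ψ)*(C/x^2))^2 := by
        positivity
      have t2 : 0 ≤ 6*(Real.exp (ψ*x) - Real.exp ψ)*(ψ^2*Real.exp (ψ*x))*(Emax - C/x)^2 :=
        mul_nonneg (mul_nonneg (mul_nonneg (by norm_num) ha.le) (by positivity)) (sq_nonneg _)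
      have t3 : 0 ≤ 4*(Real.exp (ψ*x) - Real.exp ψ)^2*(Emax - C/x)*(C/x^3) :=
        mul_nonneg (mul_nonneg (by positivity) hb.le) (div_nonneg hC.le (by positivity))
      have h4 : 0 ≤ (Real.exp (ψ*x) - Real.exp ψ)^4 / (Emax - C/x)^4 := by positivity
      nlinarith
    apply mul_nonneg hc₀ (mul_nonneg hK _)
    apply div_nonneg hnum
    exact mul_nonneg (by positivity) (Real.sqrt_nonneg _)

theorem objective_convex
    (ψ Emax C K : ℝ) (hψ : 0 < ψ) (hEmax : 0 < Emax) (hC : 0 < C) (hK : 0 < K)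
    (I : Set ℝ) (hIconv : Convex ℝ I) (hI : I ⊆ Ioi 1)
    (hpos : ∀ Q ∈ I, 0 < Emax - C / Q)
    (hcond : ∀ Q ∈ I, 0 ≤ 3 * ψ ^ 2 * Real.exp ψ * Q ^ 2 - 2 * Emax * Q + C)
    (c₀ A B : ℝ) (hc₀ : 0 ≤ c₀) (hA : 0 ≤ A) (hB : 0 ≤ B) :
    ConvexOn ℝ I (fun Q =>
      c₀ * (K * Real.sqrt ((Real.exp (ψ * Q) - Real.exp ψ) ^ 3 / (Emax - C / Q))) +
        A / Q + B / Real.sqrt Q) := by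
  have hβ : ConvexOn ℝ I
      (fun Q => c₀ * (K * Real.sqrt ((Real.exp (ψ*Q) - Real.exp ψ)^3 / (Emax - C/Q)))) :=
    beta_convexOn ψ Emax C c₀ K hψ hC hc₀ hK.le I hIconv hI hpos
  have hfacts : ∀ x ∈ I, (0:ℝ) < x := fun x hx => lt_trans one_pos (hI hx)
  have hAc : ConvexOn ℝ I (fun Q : ℝ => A / Q) := by
    apply aux_convexOn hIconv (f1 := fun x => -A/x^2) (f2 := fun x => 2*A/x^3)
    · intro x hx
      have hx0 := hfacts x hx
      have h := (hasDerivAt_const x A).div (hasDerivAt_id x) hx0.ne'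
      refine h.congr_deriv ?_
      simp only [id]
      field_simp
      ring
    · intro x hx
      have hx0 := hfacts x (interior_subset hx)
      have h := (hasDerivAt_const x (-A)).div (hasDerivAt_pow 2 x) (pow_ne_zero 2 hx0.ne')
      refine h.congr_deriv ?_
      field_simp
      ring
    · intro x hx
      have hx0 := hfacts x (interior_subset hx)
      exact div_nonneg (by linarith) (by positivity)
  have hBc : ConvexOn ℝ I (fun Q : ℝ => B / Real.sqrt Q) := by
    apply aux_convexOn hIconv (f1 := fun x => -B/(2*x*Real.sqrt x))
      (f2 := fun x => 3*B/(4*x^2*Real.sqrt x))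
    · intro x hx
      have hx0 := hfacts x hx
      have hs : 0 < Real.sqrt x := Real.sqrt_pos.2 hx0
      have h := (hasDerivAt_const x B).div (hasDerivAt_sqrt hx0.ne') hs.ne'
      refine h.congr_deriv ?_
      have hsq : Real.sqrt x ^ 2 = x := Real.sq_sqrt hx0.le
      set s := Real.sqrt x
      rw [← hsq]
      field_simp
      rcases eq_or_ne B 0 with hB0 | hB0
      · simp [hB0]
      · ring
    · intro x hx
      have hx0 := hfacts x (interior_subset hx)
      have hs : 0 < Real.sqrt x := Real.sqrt_pos.2 hx0
      have hden : (2:ℝ)*x*Real.sqrt x ≠ 0 := by positivity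
      have h := (hasDerivAt_const x (-B)).div
        (((hasDerivAt_id x).const_mul 2).mul (hasDerivAt_sqrt hx0.ne')) hden
      refine h.congr_deriv ?_
      simp only [id, Pi.mul_apply]
      have hsq : Real.sqrt x ^ 2 = x := Real.sq_sqrt hx0.le
      set s := Real.sqrt x
      rw [← hsq]
      field_simp
      ring
    · intro x hx
      have hx0 := hfacts x (interior_subset hx)
      apply div_nonneg (by linarith)
      exact mul_nonneg (by positivity) (Real.sqrt_nonneg _)
  exact (hβ.add hAc).add hBc
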